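/- Let (Z(t))_{t≥0} be a sequence of nonnegative random variables and (I(t))_{t≥0} indicator random variables with E[I(t) | Z(t)] ≥ ε̄ > 0 for all t, and suppose Z(t+1) ≤ (1 − I(t))·Z(t) + a(t) + s(t) where a(t), s(t) ≥ 0 are random variables independent of Z(t) with E[a(t)] ≤ λ and E[s(t)] ≤ μ for constants λ, μ ≥ 0. If E[Z(0)] ≤ C₀, then for all t, E[Z(t)] ≤ max{(λ + μ)/ε̄, C₀}. -/

import Mathlib

open MeasureTheory ProbabilityTheory

lemma key_step {Ω : Type*} [MeasureSpace Ω] [IsProbabilityMeasure (volume : Measure Ω)]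
    (Z I : Ω → ℝ) (ε : ℝ) (hε : 0 < ε)
    (hZnn : ∀ᵐ ω, 0 ≤ Z ω)
    (hZm : Measurable Z) (hZint : Integrable Z)
    (hIZint : Integrable (fun ω => I ω * Z ω))
    (hcond : ∀ᵐ ω,
      ε ≤ (volume[I | MeasurableSpace.comap Z Real.measurableSpace]) ω) :
    ε * ∫ ω, Z ω ≤ ∫ ω, I ω * Z ω := by
  set m := MeasurableSpace.comap Z Real.measurableSpace with hm_def
  have hm : m ≤ _ := hZm.comap_le
  by_cases hI : Integrable I
  swap
  · exfalso
    have h0 : ((MeasureTheory.condExp m volume I)) = 0 := condExp_of_not_integrable hI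
    obtain ⟨ω, hω⟩ := (hcond).exists
    rw [h0] at hω
    simp at hω
    linarith
  have hZsm : StronglyMeasurable[m] Z :=
    (Measurable.stronglyMeasurable (fun _ hs => ⟨_, hs, rfl⟩))
  have hZIint : Integrable (Z * I) := by
    have : (Z * I) = fun ω => I ω * Z ω := by ext ω; simp [mul_comm]
    rw [this]; exact hIZint
  have hpull : ((MeasureTheory.condExp m volume (Z * I))) =ᵐ[volume] Z * ((MeasureTheory.condExp m volume I)) :=
    condExp_mul_of_stronglyMeasurable_left hZsm hZIint hI
  have h1 : ∫ ω, I ω * Z ω = ∫ ω, ((MeasureTheory.condExp m volume (Z * I))) ω := by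
    have h1' : ∫ ω, ((MeasureTheory.condExp m volume (Z * I))) ω = ∫ ω, (Z * I) ω :=
      integral_condExp (μ := volume) (f := Z * I) hm
    rw [h1']
    refine integral_congr_ae (Filter.Eventually.of_forall fun ω => ?_)
    simp [mul_comm]
  rw [h1]
  have hint2 : Integrable (Z * ((MeasureTheory.condExp m volume I))) :=
    (integrable_condExp).congr hpull
  calc ε * ∫ ω, Z ω = ∫ ω, ε * Z ω := by rw [integral_const_mul]
    _ ≤ ∫ ω, (Z * ((MeasureTheory.condExp m volume I))) ω := by
        apply integral_mono_ae (hZint.const_mul ε) hint2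
        filter_upwards [hZnn, hcond] with ω h1 h2
        simp only [Pi.mul_apply]
        calc ε * Z ω = Z ω * ε := mul_comm _ _
          _ ≤ Z ω * ((MeasureTheory.condExp m volume I)) ω := mul_le_mul_of_nonneg_left h2 h1
    _ = ∫ ω, ((MeasureTheory.condExp m volume (Z * I))) ω := (integral_congr_ae hpull).symm

theorem stmt_8 {Ω : Type*} [MeasureSpace Ω] [IsProbabilityMeasure (volume : Measure Ω)]
    (Z I a s : ℕ → Ω → ℝ) (ε lam mu C₀ : ℝ)
    (hε : 0 < ε) (hε1 : ε ≤ 1) (hlam : 0 ≤ lam) (hmu : 0 ≤ mu)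
    (hZnn : ∀ t, ∀ᵐ ω, 0 ≤ Z t ω)
    (hInd : ∀ t, ∀ᵐ ω, I t ω = 0 ∨ I t ω = 1)
    (hZm : ∀ t, Measurable (Z t))
    (hZint : ∀ t, Integrable (Z t))
    (hIZint : ∀ t, Integrable (fun ω => I t ω * Z t ω))
    (haint : ∀ t, Integrable (a t)) (hsint : ∀ t, Integrable (s t))
    (hann : ∀ t ω, 0 ≤ a t ω) (hsnn : ∀ t ω, 0 ≤ s t ω)
    (hcond : ∀ t, ∀ᵐ ω,
      ε ≤ (volume[I t | MeasurableSpace.comap (Z t) Real.measurableSpace]) ω)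
    (hrec : ∀ t, ∀ᵐ ω, Z (t + 1) ω ≤ (1 - I t ω) * Z t ω + a t ω + s t ω)
    (haindep : ∀ t, IndepFun (a t) (Z t))
    (hsindep : ∀ t, IndepFun (s t) (Z t))
    (hEa : ∀ t, ∫ ω, a t ω ≤ lam) (hEs : ∀ t, ∫ ω, s t ω ≤ mu)
    (hZ0 : ∫ ω, Z 0 ω ≤ C₀) :
    ∀ t, ∫ ω, Z t ω ≤ max ((lam + mu) / ε) C₀ := by
  intro t
  induction t with
  | zero => exact le_trans hZ0 (le_max_right _ _)
  | succ t ih =>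
    have hkey : ε * ∫ ω, Z t ω ≤ ∫ ω, I t ω * Z t ω :=
      key_step (Z t) (I t) ε hε (hZnn t) (hZm t) (hZint t) (hIZint t) (hcond t)
    have hRHSint : Integrable (fun ω => (1 - I t ω) * Z t ω + a t ω + s t ω) := by
      have : (fun ω => (1 - I t ω) * Z t ω + a t ω + s t ω)
          = fun ω => (Z t ω - I t ω * Z t ω) + a t ω + s t ω := by
        ext ω; ring
      rw [this]
      exact (((hZint t).sub (hIZint t)).add (haint t)).add (hsint t)
    have hstep : ∫ ω, Z (t+1) ω ≤ (1 - ε) * (∫ ω, Z t ω) + lam + mu := by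
      have h1 : ∫ ω, Z (t+1) ω ≤ ∫ ω, ((1 - I t ω) * Z t ω + a t ω + s t ω) :=
        integral_mono_ae (hZint (t+1)) hRHSint (hrec t)
      have h2 : ∫ ω, ((1 - I t ω) * Z t ω + a t ω + s t ω)
          = (∫ ω, Z t ω) - (∫ ω, I t ω * Z t ω) + (∫ ω, a t ω) + (∫ ω, s t ω) := by
        have : (fun ω => (1 - I t ω) * Z t ω + a t ω + s t ω)
            = fun ω => ((Z t ω - I t ω * Z t ω) + a t ω) + s t ω := by
          ext ω; ring
        have i1 : Integrable (fun ω => Z t ω - I t ω * Z t ω) := (hZint t).sub (hIZint t)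
        have i2 : Integrable (fun ω => (Z t ω - I t ω * Z t ω) + a t ω) := i1.add (haint t)
        rw [this, integral_add i2 (hsint t), integral_add i1 (haint t),
          integral_sub (hZint t) (hIZint t)]
      rw [h2] at h1
      have := hEa t
      have := hEs t
      have hrw : (1 - ε) * (∫ ω, Z t ω) = (∫ ω, Z t ω) - ε * (∫ ω, Z t ω) := by ring
      nlinarith [h1, hkey, hrw]
    have hM : (lam + mu) ≤ ε * max ((lam + mu) / ε) C₀ := by
      have : ε * ((lam + mu) / ε) = lam + mu := by field_simp
      nlinarith [le_max_left ((lam + mu) / ε) C₀]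
    have hZtnn : 0 ≤ ∫ ω, Z t ω := integral_nonneg_of_ae (hZnn t)
    calc ∫ ω, Z (t+1) ω ≤ (1 - ε) * (∫ ω, Z t ω) + lam + mu := hstep
      _ ≤ (1 - ε) * max ((lam + mu) / ε) C₀ + ε * max ((lam + mu) / ε) C₀ := by
          have h3 : (1 - ε) * (∫ ω, Z t ω) ≤ (1 - ε) * max ((lam + mu) / ε) C₀ :=
            mul_le_mul_of_nonneg_left ih (by linarith)
          nlinarith [h3, hM]
      _ = max ((lam + mu) / ε) C₀ := by ring
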